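/- The ring homomorphism F : ℤ⟨X_g : g ∈ Γ⟩ → (ℤ⟨Γ⟩, +, ⊗) defined by F(X_g) = b_g is injective; consequently (ℤ⟨Γ⟩, +, ⊗) is a free ring on the set Γ. -/

import Mathlib

/-- Involution on words: reverse and invert letters. -/
def wordInv {Γ : Type*} [Group Γ] (w : List Γ) : List Γ := (w.map (·⁻¹)).reverse

/-- Fusion of two words: multiply the last letter of `u` with the first letter of `v`. -/
def fuse {Γ : Type*} [Group Γ] (u v : List Γ) : List Γ :=
  match u.getLast?, v with
  | some a, b :: t => u.dropLast ++ (a * b) :: t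
  | _, _ => u ++ v

open scoped Classical in
/-- The fusion product on basis elements:
`b_x ⊗ b_y = Σ_{x=u·t, y=t̄·v} b_{u·v} + Σ_{x=u·t, y=t̄·v, u≠∅, v≠∅} b_{u∗v}`. -/
noncomputable def basisMul {Γ : Type*} [Group Γ] (x y : List Γ) : List Γ →₀ ℤ :=
  ∑ k ∈ Finset.range (min x.length y.length + 1),
    if wordInv (x.drop (x.length - k)) = y.take k then
      Finsupp.single (x.take (x.length - k) ++ y.drop k) 1 +
        (if k < x.length ∧ k < y.length then
          Finsupp.single (fuse (x.take (x.length - k)) (y.drop k)) 1 else 0)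
    else 0

/-- The fusion product `⊗` on the free `ℤ`-module `ℤ⟨Γ⟩` on words over `Γ`,
extended bilinearly from the fusion rules. -/
noncomputable def fmul {Γ : Type*} [Group Γ] (α β : List Γ →₀ ℤ) : List Γ →₀ ℤ :=
  α.sum fun x a => β.sum fun y b => (a * b) • basisMul x y


/-- The ring homomorphism `F : ℤ⟨X_g : g ∈ Γ⟩ → (ℤ⟨Γ⟩, +, ⊗)` with `F(X_g) = b_g`
is injective (hence, together with surjectivity, `(ℤ⟨Γ⟩, +, ⊗)` is a free ring on `Γ`). -/
lemma single_apply_len {Γ : Type*} (w z : List Γ) (h : w.length ≠ z.length) :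
    (Finsupp.single w (1:ℤ)) z = 0 :=
  Finsupp.single_eq_of_ne (fun e => h (by rw [e]))

open scoped Classical in
lemma lemC {Γ : Type*} [Group Γ] (g : Γ) (y z : List Γ) (hz : 1 + y.length ≤ z.length) :
    basisMul [g] y z = if z = g :: y then 1 else 0 := by
  rw [basisMul, Finset.sum_apply']
  cases y with
  | nil =>
      rw [show min ([g].length) (([]:List Γ).length) + 1 = 1 by simp, Finset.sum_range_one]
      simp only [apply_ite (fun f : List Γ →₀ ℤ => f z), Finsupp.coe_zero, Pi.zero_apply,
        Finsupp.add_apply]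
      rw [if_pos (by simp [wordInv])]
      rw [if_neg (by simp)]
      simp [Finsupp.single_apply, eq_comm]
  | cons c t =>
      rw [show min ([g].length) ((c::t).length) + 1 = 2 by simp]
      rw [Finset.sum_range_succ, Finset.sum_range_one]
      simp only [apply_ite (fun f : List Γ →₀ ℤ => f z), Finsupp.coe_zero, Pi.zero_apply,
        Finsupp.add_apply]
      have hfuse : fuse [g] (c :: t) = (g * c) :: t := by rfl
      rw [if_pos (by simp [wordInv])]
      rw [if_pos (by simp)]
      simp only [List.length_cons, List.length_nil] at hz ⊢
      norm_num
      rw [hfuse]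
      rw [single_apply_len ((g*c)::t) z (by simp; omega)]
      rw [show (if wordInv [g] = [c] then (Finsupp.single t (1:ℤ)) z else 0) = 0 by
        split
        · exact single_apply_len t z (by omega)
        · rfl]
      simp [Finsupp.single_apply, eq_comm]

open scoped Classical in
lemma keyB {Γ : Type*} [Group Γ]
    (F : FreeAlgebra ℤ Γ →+ (List Γ →₀ ℤ))
    (hmul : ∀ a b : FreeAlgebra ℤ Γ, F (a * b) = fmul (F a) (F b))
    (hone : F 1 = Finsupp.single ([] : List Γ) 1)
    (hgen : ∀ g : Γ, F (FreeAlgebra.ι ℤ g) = Finsupp.single [g] 1) :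
    ∀ (w z : List Γ), w.length ≤ z.length →
      F ((w.map (FreeAlgebra.ι ℤ)).prod) z = if z = w then 1 else 0 := by
  intro w
  induction w with
  | nil =>
      intro z _
      simp only [List.map_nil, List.prod_nil, hone]
      simp [Finsupp.single_apply, eq_comm]
  | cons g w ih =>
      intro z hz
      rw [List.map_cons, List.prod_cons, hmul, hgen]
      set β := F ((w.map (FreeAlgebra.ι ℤ)).prod) with hβ
      have hsupp : ∀ y ∈ β.support, y.length ≤ w.length := by
        intro y hy
        by_contra hlen
        push_neg at hlen
        have := ih y hlen.le
        rw [if_neg (by rintro rfl; omega)] at this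
        exact (Finsupp.mem_support_iff.1 hy) this
      rw [fmul, Finsupp.sum_single_index (by simp), Finsupp.sum_apply]
      simp only [one_mul, Finsupp.smul_apply, smul_eq_mul]
      cases z with
      | nil => simp at hz
      | cons a t =>
          have hz' : w.length ≤ t.length := by simp at hz; omega
          rw [Finsupp.sum_congr (g2 := fun y b => b * (if a :: t = g :: y then 1 else 0))
            (by
              intro y hy
              rw [lemC g y (a :: t) (by have := hsupp y hy; simp; omega)])]
          by_cases hag : a = g
          · subst hag
            rw [Finsupp.sum_congr (g2 := fun y b => if y = t then b else 0)
              (by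
                intro y _
                simp only [List.cons.injEq, true_and]
                by_cases h : y = t
                · subst h; simp
                · rw [if_neg (by exact fun e => h e.symm), if_neg h, mul_zero])]
            rw [Finsupp.sum_ite_self_eq' β t, ih t hz']
            simp
          · rw [Finsupp.sum_congr (g2 := fun _ _ => 0)
              (by
                intro y _
                rw [if_neg (by simp [hag]), mul_zero]),
              Finsupp.sum, Finset.sum_const_zero]
            rw [if_neg (by simp [hag])]

theorem fusion_ringHom_injective' {Γ : Type*} [Group Γ]
    (F : FreeAlgebra ℤ Γ →+ (List Γ →₀ ℤ))
    (hmul : ∀ a b : FreeAlgebra ℤ Γ, F (a * b) = fmul (F a) (F b))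
    (hone : F 1 = Finsupp.single ([] : List Γ) 1)
    (hgen : ∀ g : Γ, F (FreeAlgebra.ι ℤ g) = Finsupp.single [g] 1) :
    Function.Injective F := by
  classical
  rw [injective_iff_map_eq_zero]
  intro p hp
  by_contra hne
  set B := FreeAlgebra.basisFreeMonoid ℤ Γ with hB
  set r : FreeMonoid Γ →₀ ℤ := B.repr p with hr
  have hr0 : r ≠ 0 := fun h => hne (by
    have := B.repr.injective (a₁ := p) (a₂ := 0) (by simp [← hr, h])
    exact this)
  obtain ⟨w, hw, hmax⟩ := Finset.exists_max_image r.support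
    (fun y => (FreeMonoid.toList y).length) (Finsupp.support_nonempty_iff.2 hr0)
  have hBw : ∀ y : FreeMonoid Γ, B y = ((FreeMonoid.toList y).map (FreeAlgebra.ι ℤ)).prod := by
    intro y
    rw [hB, FreeAlgebra.basisFreeMonoid]
    simp only [Module.Basis.map_apply, Finsupp.coe_basisSingleOne]
    show (FreeAlgebra.equivMonoidAlgebraFreeMonoid (R := ℤ) (X := Γ)).symm
      (MonoidAlgebra.single y (1:ℤ)) = _
    rw [show ((FreeAlgebra.equivMonoidAlgebraFreeMonoid (R := ℤ) (X := Γ)).symm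
        (MonoidAlgebra.single y (1:ℤ)) : FreeAlgebra ℤ Γ) =
        (MonoidAlgebra.lift ℤ (FreeAlgebra ℤ Γ) (FreeMonoid Γ))
          (FreeMonoid.lift (FreeAlgebra.ι ℤ)) (MonoidAlgebra.single y 1) from rfl]
    rw [MonoidAlgebra.lift_single, FreeMonoid.lift_apply]
    exact one_smul ℤ _
  have hrep : p = r.sum fun y c => c • ((FreeMonoid.toList y).map (FreeAlgebra.ι ℤ)).prod := by
    conv_lhs => rw [← B.linearCombination_repr p]
    rw [Finsupp.linearCombination_apply]
    exact Finsupp.sum_congr fun y _ => by rw [hBw y]; rfl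
  have hFp : F p = r.sum fun y c => c • F (((FreeMonoid.toList y).map (FreeAlgebra.ι ℤ)).prod) := by
    rw [hrep, map_finsuppSum]
    exact Finsupp.sum_congr fun y _ => map_zsmul F _ _
  have := congrArg (fun f => f (FreeMonoid.toList w)) hFp
  rw [hp] at this
  simp only [Finsupp.coe_zero, Pi.zero_apply, Finsupp.sum_apply, Finsupp.smul_apply,
    smul_eq_mul] at this
  rw [Finsupp.sum_congr (g2 := fun y c => if y = w then c else 0)
    (by
      intro y hy
      rw [keyB F hmul hone hgen (FreeMonoid.toList y) (FreeMonoid.toList w) (hmax y hy)]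
      by_cases h : y = w
      · subst h; simp
      · rw [if_neg (fun e => h (FreeMonoid.toList.injective e.symm))]; simp [h])] at this
  rw [Finsupp.sum_ite_self_eq' r w] at this
  exact Finsupp.mem_support_iff.1 hw this.symm

theorem fusion_ringHom_injective {Γ : Type*} [Group Γ]
    (F : FreeAlgebra ℤ Γ →+ (List Γ →₀ ℤ))
    (hmul : ∀ a b : FreeAlgebra ℤ Γ, F (a * b) = fmul (F a) (F b))
    (hone : F 1 = Finsupp.single ([] : List Γ) 1)
    (hgen : ∀ g : Γ, F (FreeAlgebra.ι ℤ g) = Finsupp.single [g] 1) :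
    Function.Injective F :=
  fusion_ringHom_injective' F hmul hone hgen
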